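/- Suppose {f₁,f₂,f₃} ⊂ ℤ³∖{0} is an orthogonal frame (three pairwise orthogonal nonzero integer vectors) and f₄ = −(f₁+f₂+f₃). Then for every N₀ > 0 there exist affine functions Γ_{f_k} : V_{N₀} → [N₀,∞), k = 1,…,4, with V_{N₀} := {u ∈ ℝ³ : |u| ≤ N₀}, such that u = Σ_{k=1}^{4} Γ_{f_k}(u) f_k for all u ∈ V_{N₀}. -/

import Mathlib

open Real

noncomputable section

/-- Points of `ℝ³`. -/
abbrev V3 : Type := Fin 3 → ℝ

/-- Euclidean dot product on `ℝ³`. -/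
def dot3 (x y : V3) : ℝ := ∑ i, x i * y i

/-- Euclidean norm on `ℝ³`. -/
def enorm3 (x : V3) : ℝ := Real.sqrt (∑ i, (x i)^2)

/-- **Geometric Lemma II** (Lemma 3.2 of De Lellis–Kwon). If `f₁,f₂,f₃ ∈ ℤ³∖{0}` are
pairwise orthogonal and `f₄ = -(f₁+f₂+f₃)`, then for every `N₀ > 0` there are affine
functions `Γ_{f_k} : V_{N₀} → [N₀,∞)` with `u = Σ_k Γ_{f_k}(u) f_k` on `V_{N₀}`. -/

lemma norm_eq_enorm3 (x : EuclideanSpace ℝ (Fin 3)) : ‖x‖ = enorm3 (fun i => x i) := by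
  rw [EuclideanSpace.norm_eq, enorm3]
  congr 1
  refine Finset.sum_congr rfl fun i _ => ?_
  rw [Real.norm_eq_abs, sq_abs]

lemma cs3 (x y : V3) : |dot3 x y| ≤ enorm3 x * enorm3 y := by
  have h := abs_real_inner_le_norm ((WithLp.equiv 2 (Fin 3 → ℝ)).symm x) ((WithLp.equiv 2 (Fin 3 → ℝ)).symm y)
  have h1 : (inner ℝ ((WithLp.equiv 2 (Fin 3 → ℝ)).symm x)
      ((WithLp.equiv 2 (Fin 3 → ℝ)).symm y) : ℝ) = dot3 x y := by
    rw [PiLp.inner_apply, dot3]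
    simp [RCLike.inner_apply, mul_comm]
  rw [h1, norm_eq_enorm3, norm_eq_enorm3] at h
  exact h

lemma enorm3_smul (c : ℝ) (x : V3) : enorm3 (fun i => c * x i) = |c| * enorm3 x := by
  rw [enorm3, enorm3]
  have : ∑ i, (c * x i)^2 = c^2 * ∑ i, (x i)^2 := by
    rw [Finset.mul_sum]; exact Finset.sum_congr rfl fun i _ => by ring
  rw [this, Real.sqrt_mul (sq_nonneg c), Real.sqrt_sq_eq_abs]

-- expansion lemma in EuclideanSpace
lemma expand (g : Fin 3 → EuclideanSpace ℝ (Fin 3))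
    (hnz : ∀ k, g k ≠ 0)
    (ho : ∀ k l, k ≠ l → inner ℝ (g k) (g l) = (0:ℝ)) :
    ∀ u : EuclideanSpace ℝ (Fin 3),
      ∑ k, ((inner ℝ (g k) u : ℝ) / ‖g k‖^2) • g k = u := by
  set e : Fin 3 → EuclideanSpace ℝ (Fin 3) := fun k => (‖g k‖⁻¹ : ℝ) • g k with he
  have hon : Orthonormal ℝ e := by
    rw [orthonormal_iff_ite]
    intro i j
    simp only [he, inner_smul_left, inner_smul_right, RCLike.conj_to_real]
    by_cases h : i = j
    · subst h
      rw [real_inner_self_eq_norm_sq]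
      have : ‖g i‖ ≠ 0 := norm_ne_zero_iff.mpr (hnz i)
      field_simp
      simp
    · simp [h, ho i j h]
  have hcard : Fintype.card (Fin 3) = Module.finrank ℝ (EuclideanSpace ℝ (Fin 3)) := by
    simp
  have hb : ⇑(basisOfOrthonormalOfCardEqFinrank hon hcard) = e :=
    coe_basisOfOrthonormalOfCardEqFinrank hon hcard
  have hsp : ⊤ ≤ Submodule.span ℝ (Set.range e) := by
    rw [← hb]
    exact (basisOfOrthonormalOfCardEqFinrank hon hcard).span_eq.ge
  have hB : ⇑(OrthonormalBasis.mk hon hsp) = e := OrthonormalBasis.coe_mk hon hsp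
  intro u
  have hrepr := (OrthonormalBasis.mk hon hsp).sum_repr' u
  rw [hB] at hrepr
  calc ∑ k, ((inner ℝ (g k) u : ℝ) / ‖g k‖^2) • g k
      = ∑ k, (inner ℝ (e k) u : ℝ) • e k := by
        refine Finset.sum_congr rfl fun k _ => ?_
        simp only [he, inner_smul_left, RCLike.conj_to_real, smul_smul]
        congr 1
        have hk : ‖g k‖ ≠ 0 := norm_ne_zero_iff.mpr (hnz k)
        rw [div_eq_mul_inv, sq, mul_inv]
        ring
    _ = u := hrepr

theorem geometric_lemma_II (f : Fin 4 → Fin 3 → ℤ)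
    (hne : ∀ k : Fin 4, k ≠ 3 → f k ≠ 0)
    (horth : ∀ k l : Fin 4, k ≠ 3 → l ≠ 3 → k ≠ l → (∑ i, f k i * f l i) = 0)
    (hf4 : ∀ i : Fin 3, f 3 i = -(f 0 i + f 1 i + f 2 i)) :
    ∀ N₀ : ℝ, 0 < N₀ →
      ∃ Γ : Fin 4 → V3 → ℝ,
        -- each Γ k is affine
        (∀ k : Fin 4, ∃ (c : ℝ) (w : V3), ∀ u : V3, Γ k u = c + dot3 w u) ∧
        -- with values in [N₀, ∞) on V_{N₀}
        (∀ k : Fin 4, ∀ u : V3, enorm3 u ≤ N₀ → N₀ ≤ Γ k u) ∧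
        -- the decomposition u = Σ_k Γ_{f_k}(u) f_k on V_{N₀}
        (∀ u : V3, enorm3 u ≤ N₀ → ∀ i : Fin 3,
          u i = ∑ k, Γ k u * (f k i : ℝ)) := by
  intro N₀ hN₀
  set g : Fin 3 → EuclideanSpace ℝ (Fin 3) :=
    fun k => WithLp.toLp 2 (fun i => ((f (Fin.castSucc k) i : ℝ))) with hg
  have hcast : ∀ k : Fin 3, (Fin.castSucc k : Fin 4) ≠ 3 := by decide
  have hnz : ∀ k, g k ≠ 0 := by
    intro k hk
    apply hne (Fin.castSucc k) (hcast k)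
    funext i
    have : g k i = 0 := by rw [hk]; rfl
    simpa [hg] using this
  have hinner : ∀ k l, inner ℝ (g k) (g l)
      = ((∑ i, f (Fin.castSucc k) i * f (Fin.castSucc l) i : ℤ) : ℝ) := by
    intro k l
    rw [PiLp.inner_apply]
    push_cast
    simp [hg, RCLike.inner_apply, mul_comm]
  have ho : ∀ k l, k ≠ l → inner ℝ (g k) (g l) = (0:ℝ) := by
    intro k l hkl
    rw [hinner, horth _ _ (hcast k) (hcast l) (by
      simpa [Fin.castSucc_inj] using hkl)]
    norm_num
  have hge1 : ∀ k, (1:ℝ) ≤ ‖g k‖ := by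
    intro k
    have h1 : (1:ℝ) ≤ ‖g k‖^2 := by
      rw [← real_inner_self_eq_norm_sq, hinner]
      have : (1:ℤ) ≤ ∑ i, f (Fin.castSucc k) i * f (Fin.castSucc k) i := by
        rcases Function.ne_iff.mp (hne (Fin.castSucc k) (hcast k)) with ⟨i, hi⟩
        rw [Pi.zero_apply] at hi
        have hterm : (1:ℤ) ≤ f (Fin.castSucc k) i * f (Fin.castSucc k) i := by
          nlinarith [Int.one_le_abs hi, abs_nonneg (f (Fin.castSucc k) i), sq_abs (f (Fin.castSucc k) i)]
        calc (1:ℤ) ≤ f (Fin.castSucc k) i * f (Fin.castSucc k) i := hterm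
          _ ≤ ∑ j, f (Fin.castSucc k) j * f (Fin.castSucc k) j :=
              Finset.single_le_sum (f := fun j => f (Fin.castSucc k) j * f (Fin.castSucc k) j)
                (fun j _ => mul_self_nonneg _) (Finset.mem_univ i)
      exact_mod_cast this
    nlinarith [norm_nonneg (g k)]
  have hgpos : ∀ k, (0:ℝ) < ‖g k‖ := fun k => lt_of_lt_of_le one_pos (hge1 k)
  set w : Fin 4 → V3 := fun k =>
    if h : k ≠ 3 then (fun i => g (k.castPred h) i / ‖g (k.castPred h)‖^2) else 0 with hw
  have hwnorm : ∀ k : Fin 4, enorm3 (w k) ≤ 1 := by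
    intro k
    by_cases h : k = 3
    · subst h
      simp only [hw, dif_neg (by simp : ¬ ((3:Fin 4) ≠ 3))]
      have : enorm3 (0 : V3) = 0 := by simp [enorm3]
      rw [this]; norm_num
    · set m := k.castPred h
      have hwk : w k = fun i => (‖g m‖^2)⁻¹ * g m i := by
        simp only [hw, dif_pos h]
        funext i; rw [div_eq_inv_mul]
      rw [hwk, enorm3_smul, ← norm_eq_enorm3]
      have h1 : |(‖g m‖^2)⁻¹| = (‖g m‖^2)⁻¹ := abs_of_nonneg (by positivity)
      rw [h1]
      have h2 : (‖g m‖^2)⁻¹ * ‖g m‖ = ‖g m‖⁻¹ := by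
        field_simp [ne_of_gt (hgpos m)]
      rw [h2]
      rw [inv_le_one_iff₀]
      right; exact hge1 m
  refine ⟨fun k u => 2 * N₀ + dot3 (w k) u, ?_, ?_, ?_⟩
  · intro k; exact ⟨2 * N₀, w k, fun u => rfl⟩
  · intro k u hu
    have key : |dot3 (w k) u| ≤ N₀ := by
      calc |dot3 (w k) u| ≤ enorm3 (w k) * enorm3 u := cs3 _ _
        _ ≤ 1 * N₀ := by
            apply mul_le_mul (hwnorm k) hu _ one_pos.le
            have := Real.sqrt_nonneg (∑ i, (u i)^2)
            exact this
        _ = N₀ := one_mul _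
    have h := (abs_le.mp key).1
    show N₀ ≤ 2 * N₀ + dot3 (w k) u
    linarith
  · intro u hu i
    set U : EuclideanSpace ℝ (Fin 3) := WithLp.toLp 2 (fun j => u j) with hU
    have hexp := congrFun (congrArg WithLp.ofLp (expand g hnz ho U)) i
    have hsum : (∑ k, ((inner ℝ (g k) U : ℝ) / ‖g k‖^2) • g k) i
        = ∑ k, ((inner ℝ (g k) U : ℝ) / ‖g k‖^2) * g k i := by
      rw [WithLp.ofLp_sum, Finset.sum_apply]
      rfl
    rw [hsum] at hexp
    have hdot : ∀ m : Fin 3, dot3 (w (Fin.castSucc m)) u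
        = (inner ℝ (g m) U : ℝ) / ‖g m‖^2 := by
      intro m
      have h3 : w (Fin.castSucc m) = fun i => g m i / ‖g m‖^2 := by
        simp only [hw, dif_pos (hcast m), Fin.castPred_castSucc]
      rw [h3, dot3, PiLp.inner_apply]
      rw [Finset.sum_div]
      refine Finset.sum_congr rfl fun j _ => ?_
      simp only [RCLike.inner_apply, conj_trivial]
      have : U j = u j := rfl
      rw [this]
      ring
    rw [Fin.sum_univ_castSucc]
    have hlast : (Fin.last 3) = (3 : Fin 4) := rfl
    have hwlast : w (Fin.last 3) = 0 := by
      simp only [hw, hlast, dif_neg (by simp : ¬ ((3:Fin 4) ≠ 3))]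
    have hdlast : dot3 (w (Fin.last 3)) u = 0 := by
      rw [hwlast, dot3]; simp
    rw [hlast] at hdlast ⊢
    have step : ∀ m : Fin 3,
        (2 * N₀ + dot3 (w (Fin.castSucc m)) u) * (f (Fin.castSucc m) i : ℝ)
        = 2 * N₀ * (f (Fin.castSucc m) i : ℝ)
          + ((inner ℝ (g m) U : ℝ) / ‖g m‖^2) * g m i := by
      intro m
      rw [hdot m]
      have : g m i = (f (Fin.castSucc m) i : ℝ) := rfl
      rw [this]; ring
    rw [Finset.sum_congr rfl fun m _ => step m]
    rw [Finset.sum_add_distrib, hexp]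
    have hzero : (∑ m : Fin 3, 2 * N₀ * (f (Fin.castSucc m) i : ℝ))
        + (2 * N₀ + dot3 (w 3) u) * (f 3 i : ℝ) = 0 := by
      rw [hdlast]
      rw [Fin.sum_univ_three]
      have h0 : (Fin.castSucc (0 : Fin 3)) = (0 : Fin 4) := rfl
      have h1 : (Fin.castSucc (1 : Fin 3)) = (1 : Fin 4) := rfl
      have h2 : (Fin.castSucc (2 : Fin 3)) = (2 : Fin 4) := rfl
      rw [h0, h1, h2]
      have h4 : (f 3 i : ℝ) = -((f 0 i : ℝ) + (f 1 i : ℝ) + (f 2 i : ℝ)) := by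
        rw [hf4 i]; push_cast; ring
      rw [h4]; ring
    have hui : U i = u i := rfl
    beta_reduce
    linarith [hexp, hzero, hui]
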